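/- Let H be a complex Hilbert space and A a bounded self-adjoint linear operator on H. Let φ, ψ : ℝ → ℂ be continuous even functions with φ(t) ≠ 0 for all t ∈ ℝ, such that |φ| and |ψ| are strictly increasing on (0,∞) and |φ(t)|/|ψ(t)| is non-increasing on (0,∞). Fix b > 0 and let N(b) and η_b be as defined. Then for every x ∈ H with ‖(ψ/φ)(A)x‖ ≤ 1, the element y = η_b(A)x satisfies ‖ψ(A)y‖ ≤ N(b) and ‖x − y‖ ≤ |φ(b)|/|ψ(b)|. In particular, every element of the class W^{ψ/φ} = {x : ‖(ψ/φ)(A)x‖ ≤ 1} lies within distance |φ(b)|/|ψ(b)| of the set N(b)·W^ψ = {z : ‖ψ(A)z‖ ≤ N(b)}. -/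

import Mathlib

/-- The truncation `φ_b(t) = φ(t) − (φ(b)/ψ(b))·ψ(t)` for `|t| ≤ b`, `0` otherwise. -/
noncomputable def phib (φ ψ : ℝ → ℂ) (b : ℝ) : ℝ → ℂ :=
  fun t => if |t| ≤ b then φ t - (φ b / ψ b) * ψ t else 0

/-- `N(b) = sup_{t ∈ ℝ} |φ_b(t)|`. -/
noncomputable def Nb (φ ψ : ℝ → ℂ) (b : ℝ) : ℝ :=
  ⨆ t : ℝ, ‖phib φ ψ b t‖

/-- `η_b(t) = 1 − (φ(b)/ψ(b))·(ψ(t)/φ(t))` for `|t| ≤ b`, `0` otherwise. -/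
noncomputable def etab (φ ψ : ℝ → ℂ) (b : ℝ) : ℝ → ℂ :=
  fun t => if |t| ≤ b then 1 - (φ b / ψ b) * (ψ t / φ t) else 0

section aux

variable {φ : ℝ → ℂ} {b : ℝ}

/-- even functions satisfy `φ |t| = φ t`. -/
lemma even_abs_eq (hφe : ∀ t : ℝ, φ (-t) = φ t) (t : ℝ) : φ |t| = φ t := by
  rcases abs_cases t with ⟨h, _⟩ | ⟨h, _⟩
  · rw [h]
  · rw [h, hφe]

/-- for continuous even `φ` with `|φ|` strictly increasing on `(0,∞)`,
`‖φ t‖ ≤ ‖φ b‖` whenever `|t| ≤ b`. -/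
lemma norm_le_of_abs_le (hφc : Continuous φ) (hφe : ∀ t : ℝ, φ (-t) = φ t)
    (hφm : StrictMonoOn (fun t => ‖φ t‖) (Set.Ioi (0 : ℝ))) (hb : 0 < b)
    {t : ℝ} (ht : |t| ≤ b) : ‖φ t‖ ≤ ‖φ b‖ := by
  rw [← even_abs_eq hφe t]
  rcases eq_or_lt_of_le (abs_nonneg t) with h0 | h0
  · rw [← h0]
    have htd : Filter.Tendsto (fun u : ℝ => ‖φ u‖) (nhdsWithin 0 (Set.Ioi 0)) (nhds ‖φ 0‖) :=
      ((hφc.norm.tendsto 0)).mono_left nhdsWithin_le_nhds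
    refine le_of_tendsto htd ?_
    filter_upwards [Ioo_mem_nhdsGT_of_mem (Set.mem_Ico.mpr ⟨le_refl _, hb⟩)] with u hu
    exact (hφm.monotoneOn) hu.1 (Set.mem_Ioi.mpr hb) hu.2.le
  · exact (hφm.monotoneOn) (Set.mem_Ioi.mpr h0) (Set.mem_Ioi.mpr hb) ht

end aux


/-- **Approximation of the class `W^{ψ/φ}` by the homothet `N(b)·W^ψ`.** Here
`g(A)` is encoded via the continuous functional calculus of the self-adjoint
operator `A` applied to `z ↦ g(Re z)`. If `‖(ψ/φ)(A)x‖ ≤ 1`, then the element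
`y = η_b(A)x` satisfies `‖ψ(A)y‖ ≤ N(b)` and `‖x − y‖ ≤ |φ(b)|/|ψ(b)|`; in
particular every element of `W^{ψ/φ}` lies within distance `|φ(b)|/|ψ(b)|` of
the set `{z : ‖ψ(A)z‖ ≤ N(b)}`. -/
theorem class_approx_by_homothet
    {H : Type*} [NormedAddCommGroup H] [InnerProductSpace ℂ H] [CompleteSpace H]
    (A : H →L[ℂ] H) (hA : IsSelfAdjoint A)
    (φ ψ : ℝ → ℂ) (hφc : Continuous φ) (hψc : Continuous ψ)
    (hφ0 : ∀ t : ℝ, φ t ≠ 0)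
    (hφe : ∀ t : ℝ, φ (-t) = φ t) (hψe : ∀ t : ℝ, ψ (-t) = ψ t)
    (hφm : StrictMonoOn (fun t => ‖φ t‖) (Set.Ioi (0 : ℝ)))
    (hψm : StrictMonoOn (fun t => ‖ψ t‖) (Set.Ioi (0 : ℝ)))
    (hratio : AntitoneOn (fun t => ‖φ t‖ / ‖ψ t‖) (Set.Ioi (0 : ℝ)))
    (b : ℝ) (hb : 0 < b) :
    (∀ x : H, ‖cfc (fun z : ℂ => ψ z.re / φ z.re) A x‖ ≤ 1 →
      ‖cfc (fun z : ℂ => ψ z.re) A (cfc (fun z : ℂ => etab φ ψ b z.re) A x)‖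
          ≤ Nb φ ψ b ∧
      ‖x - cfc (fun z : ℂ => etab φ ψ b z.re) A x‖ ≤ ‖φ b‖ / ‖ψ b‖) ∧
    (∀ x : H, ‖cfc (fun z : ℂ => ψ z.re / φ z.re) A x‖ ≤ 1 →
      ∃ z : H, ‖cfc (fun z' : ℂ => ψ z'.re) A z‖ ≤ Nb φ ψ b ∧
        ‖x - z‖ ≤ ‖φ b‖ / ‖ψ b‖) := by
  have hsn : IsStarNormal A := hA.isStarNormal
  -- positivity of ‖ψ b‖ and nonvanishing of ψ for |t| ≥ b
  have hψb_pos : 0 < ‖ψ b‖ := by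
    have := hψm (Set.mem_Ioi.mpr (by linarith : (0:ℝ) < b/2)) (Set.mem_Ioi.mpr hb)
      (by linarith : b/2 < b)
    have h0 : (0:ℝ) ≤ ‖ψ (b/2)‖ := norm_nonneg _
    linarith
  have hψb0 : ψ b ≠ 0 := fun h => by simp [h] at hψb_pos
  have hψ_ge : ∀ s : ℝ, b ≤ s → ψ s ≠ 0 := by
    intro s hs h
    rcases eq_or_lt_of_le hs with rfl | hlt
    · exact hψb0 h
    · have h2 : ‖ψ b‖ < ‖ψ s‖ := hψm (Set.mem_Ioi.mpr hb) (Set.mem_Ioi.mpr (hb.trans hlt)) hlt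
      rw [h, norm_zero] at h2; linarith
  -- the functions on ℂ
  set g : ℂ → ℂ := fun z => ψ z.re / φ z.re with hg_def
  set η : ℂ → ℂ := fun z => etab φ ψ b z.re with hη_def
  set Φ : ℂ → ℂ := fun z => phib φ ψ b z.re with hΦ_def
  set Ψ : ℂ → ℂ := fun z => ψ z.re with hΨ_def
  set m : ℂ → ℂ := fun z => φ (max |z.re| b) / ψ (max |z.re| b) with hm_def
  -- continuity
  have hre : Continuous fun z : ℂ => z.re := Complex.continuous_re
  have hgc : Continuous g := (hψc.comp hre).div (hφc.comp hre) fun z => hφ0 _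
  have hΨc : Continuous Ψ := hψc.comp hre
  have hηc : Continuous η := by
    have : Continuous (etab φ ψ b) := by
      unfold etab
      refine Continuous.if_le ?_ continuous_const continuous_abs continuous_const ?_
      · exact continuous_const.sub (continuous_const.mul
          (hψc.div hφc fun t => hφ0 t))
      · intro t ht
        rcases abs_eq (le_of_lt hb) |>.mp ht with rfl | rfl
        · field_simp
          rw [div_self (hφ0 _), sub_self]
        · rw [hψe, hφe]; field_simp
          rw [div_self (hφ0 _), sub_self]
    exact this.comp hre
  have hΦc : Continuous Φ := by
    have : Continuous (phib φ ψ b) := by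
      unfold phib
      refine Continuous.if_le ?_ continuous_const continuous_abs continuous_const ?_
      · exact hφc.sub (continuous_const.mul hψc)
      · intro t ht
        rcases abs_eq (le_of_lt hb) |>.mp ht with rfl | rfl
        · field_simp; simp
        · rw [hψe, hφe]; field_simp; simp
    exact this.comp hre
  have hmc : Continuous m := by
    refine Continuous.div ?_ ?_ ?_
    · exact hφc.comp ((continuous_abs.comp hre).max continuous_const)
    · exact hψc.comp ((continuous_abs.comp hre).max continuous_const)
    · intro z; exact hψ_ge _ (le_max_right _ _)
  -- pointwise identities
  have hid1 : ∀ z : ℂ, Ψ z * η z = Φ z * g z := by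
    intro z
    simp only [hΨ_def, hη_def, hΦ_def, hg_def, etab, phib]
    by_cases h : |z.re| ≤ b
    · simp only [if_pos h]
      have h1 : φ z.re ≠ 0 := hφ0 z.re
      field_simp
    · simp only [if_neg h, mul_zero, zero_mul]
  have hid2 : ∀ z : ℂ, (1 : ℂ) - η z = m z * g z := by
    intro z
    simp only [hη_def, hm_def, hg_def, etab]
    by_cases h : |z.re| ≤ b
    · rw [if_pos h, max_eq_right h]
      ring
    · push_neg at h
      rw [if_neg (not_le.mpr h), max_eq_left h.le, even_abs_eq hφe, even_abs_eq hψe]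
      have hψz : ψ z.re ≠ 0 := by
        have := hψ_ge |z.re| h.le
        rwa [even_abs_eq hψe] at this
      field_simp
      rw [sub_zero]
      exact (div_self (hφ0 _)).symm
  -- bounds
  have hbdd : BddAbove (Set.range fun t => ‖phib φ ψ b t‖) := by
    refine ⟨‖φ b‖ + ‖φ b / ψ b‖ * ‖ψ b‖, ?_⟩
    rintro r ⟨t, rfl⟩
    simp only [phib]
    by_cases h : |t| ≤ b
    · rw [if_pos h]
      calc ‖φ t - (φ b / ψ b) * ψ t‖ ≤ ‖φ t‖ + ‖(φ b / ψ b) * ψ t‖ := norm_sub_le _ _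
        _ ≤ ‖φ b‖ + ‖φ b / ψ b‖ * ‖ψ b‖ := by
            rw [norm_mul]
            have h1 := norm_le_of_abs_le hφc hφe hφm hb h
            have h2 := norm_le_of_abs_le hψc hψe hψm hb h
            have : ‖φ b / ψ b‖ * ‖ψ t‖ ≤ ‖φ b / ψ b‖ * ‖ψ b‖ :=
              mul_le_mul_of_nonneg_left h2 (norm_nonneg _)
            linarith
    · rw [if_neg h]
      simp only [norm_zero]
      positivity
  have hΦ_le : ∀ t : ℝ, ‖phib φ ψ b t‖ ≤ Nb φ ψ b := fun t => le_ciSup hbdd t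
  have hNb0 : 0 ≤ Nb φ ψ b := (norm_nonneg _).trans (hΦ_le 0)
  have hr0 : 0 ≤ ‖φ b‖ / ‖ψ b‖ := by positivity
  have hm_le : ∀ z : ℂ, ‖m z‖ ≤ ‖φ b‖ / ‖ψ b‖ := by
    intro z
    simp only [hm_def, norm_div]
    exact hratio (Set.mem_Ioi.mpr hb)
      (Set.mem_Ioi.mpr (lt_of_lt_of_le hb (le_max_right _ _))) (le_max_right _ _)
  -- operator identities
  have e1 : cfc Ψ A * cfc η A = cfc Φ A * cfc g A := by
    rw [← cfc_mul Ψ η A hΨc.continuousOn hηc.continuousOn,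
        ← cfc_mul Φ g A hΦc.continuousOn hgc.continuousOn]
    exact cfc_congr fun z _ => hid1 z
  have e2 : 1 - cfc η A = cfc m A * cfc g A := by
    rw [← cfc_mul m g A hmc.continuousOn hgc.continuousOn,
        ← cfc_one ℂ A, ← cfc_sub (1 : ℂ → ℂ) η A continuousOn_const hηc.continuousOn]
    exact cfc_congr fun z _ => hid2 z
  -- norm bounds for operators
  have hΦA : ‖cfc Φ A‖ ≤ Nb φ ψ b := norm_cfc_le hNb0 fun z _ => hΦ_le z.re
  have hmA : ‖cfc m A‖ ≤ ‖φ b‖ / ‖ψ b‖ := norm_cfc_le hr0 fun z _ => hm_le z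
  have main : ∀ x : H, ‖cfc g A x‖ ≤ 1 →
      ‖cfc Ψ A (cfc η A x)‖ ≤ Nb φ ψ b ∧ ‖x - cfc η A x‖ ≤ ‖φ b‖ / ‖ψ b‖ := by
    intro x hx
    constructor
    · have : cfc Ψ A (cfc η A x) = cfc Φ A (cfc g A x) := by
        rw [← ContinuousLinearMap.mul_apply, ← ContinuousLinearMap.mul_apply, e1]
      rw [this]
      calc ‖cfc Φ A (cfc g A x)‖ ≤ ‖cfc Φ A‖ * ‖cfc g A x‖ :=
            (cfc Φ A).le_opNorm _
        _ ≤ Nb φ ψ b * 1 := mul_le_mul hΦA hx (norm_nonneg _) hNb0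
        _ = Nb φ ψ b := mul_one _
    · have : x - cfc η A x = cfc m A (cfc g A x) := by
        rw [← ContinuousLinearMap.mul_apply, ← e2]
        simp
      rw [this]
      calc ‖cfc m A (cfc g A x)‖ ≤ ‖cfc m A‖ * ‖cfc g A x‖ := (cfc m A).le_opNorm _
        _ ≤ (‖φ b‖ / ‖ψ b‖) * 1 := mul_le_mul hmA hx (norm_nonneg _) hr0
        _ = ‖φ b‖ / ‖ψ b‖ := mul_one _
  exact ⟨main, fun x hx => ⟨cfc η A x, (main x hx).1, (main x hx).2⟩⟩
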